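/- Let ǧ be a finite-dimensional nilpotent real Lie algebra with nondegenerate symmetric bilinear form ǧg, and let σ₁,…,σ_k be 2-forms on ǧ satisfying σ_s([x,y],z) + σ_s([y,z],x) + σ_s([z,x],y) = 0 for all x,y,z ∈ ǧ and all s. Let 𝔤 = ǧ ⊕ ℝᵏ (with basis e₁,…,e_k of ℝᵏ) be the central extension with bracket [v,w]_𝔤 = [v,w]_ǧ − Σ_s σ_s(v,w) e_s for v,w ∈ ǧ and e₁,…,e_k central, endowed with the metric g = ǧg + Σ_s ε_s e^s⊗e^s with ε_s = ±1 (so ǧ ⊥ ℝᵏ, g(e_s,e_t) = ε_s δ_{st}). Then for all v,w ∈ ǧ and all s,t: ric_𝔤(v,w) = ric_ǧ(v,w) − (1/2)Σ_s ε_s ǧg(v⌟σ_s, w⌟σ_s); ric_𝔤(v,e_s) = (1/2)ε_s ǧg(ďv♭, σ_s); and ric_𝔤(e_s,e_t) = (1/2)ε_s ε_t ǧg(σ_s,σ_t), where ric_𝔤 and ric_ǧ are the Ricci tensors of (𝔤,g) and (ǧ,ǧg), ďv♭ is the 2-form on ǧ given by (x,y) ↦ −ǧg(v,[x,y]_ǧ),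 and the scalar products of 1-forms and 2-forms are those induced by ǧg. -/

import Mathlib

open LinearMap Module

noncomputable section

variable {V : Type} [AddCommGroup V] [Module ℝ V] [FiniteDimensional ℝ V]

/-- A Lie bracket on a real vector space, given as a bilinear map. -/
def IsLieBracket (br : V →ₗ[ℝ] V →ₗ[ℝ] V) : Prop :=
  (∀ x y, br x y = - br y x) ∧
    ∀ x y z, br (br x y) z + br (br y z) x + br (br z x) y = 0

/-- Nilpotency of a Lie bracket: iterated adjoint maps of length `n` vanish. -/
def IsNilpotentBracket (br : V →ₗ[ℝ] V →ₗ[ℝ] V) : Prop :=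
  ∃ n : ℕ, ∀ l : List V, l.length = n → ∀ x : V,
    l.foldr (fun v y => br v y) x = 0

/-- The derived series of a bracket. -/
def derivedSeriesB (br : V →ₗ[ℝ] V →ₗ[ℝ] V) : ℕ → Submodule ℝ V
  | 0 => ⊤
  | n + 1 => Submodule.span ℝ
      {x | ∃ a ∈ derivedSeriesB br n, ∃ b ∈ derivedSeriesB br n, x = br a b}

/-- Solvability of a Lie bracket. -/
def IsSolvableBracket (br : V →ₗ[ℝ] V →ₗ[ℝ] V) : Prop :=
  ∃ n, derivedSeriesB br n = ⊥

/-- `D` is a derivation of the bracket `br`. -/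
def IsDerivB (br : V →ₗ[ℝ] V →ₗ[ℝ] V) (D : V →ₗ[ℝ] V) : Prop :=
  ∀ x y, D (br x y) = br (D x) y + br x (D y)

/-- The musical isomorphism `♯` of a nondegenerate bilinear form. -/
def sharp (g : LinearMap.BilinForm ℝ V) (hg : g.Nondegenerate) :
    Module.Dual ℝ V →ₗ[ℝ] V :=
  (LinearMap.BilinForm.toDual g hg).symm.toLinearMap

/-- The adjoint `f*` of an endomorphism with respect to `g` :
`g (f x) y = g x (f* y)` (for symmetric `g`). -/
def adjE (g : LinearMap.BilinForm ℝ V) (hg : g.Nondegenerate)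
    (f : V →ₗ[ℝ] V) : V →ₗ[ℝ] V :=
  sharp g hg ∘ₗ ((LinearMap.llcomp ℝ V V ℝ).flip f ∘ₗ g.flip)

/-- The symmetric part `f^s = (f + f*)/2`. -/
def symPart (g : LinearMap.BilinForm ℝ V) (hg : g.Nondegenerate)
    (f : V →ₗ[ℝ] V) : V →ₗ[ℝ] V := (2:ℝ)⁻¹ • (f + adjE g hg f)

/-- The skew-symmetric part `f^a = (f - f*)/2`. -/
def skewPart (g : LinearMap.BilinForm ℝ V) (hg : g.Nondegenerate)
    (f : V →ₗ[ℝ] V) : V →ₗ[ℝ] V := (2:ℝ)⁻¹ • (f - adjE g hg f)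

/-- The endomorphism `A` associated to a bilinear form `β` by `g (A x) y = β x y`. -/
def endoOf (g : LinearMap.BilinForm ℝ V) (hg : g.Nondegenerate)
    (β : LinearMap.BilinForm ℝ V) : V →ₗ[ℝ] V := sharp g hg ∘ₗ β

/-- The scalar product of two 1-forms: `g(α♯, β♯)`. -/
def inner1 (g : LinearMap.BilinForm ℝ V) (hg : g.Nondegenerate)
    (α β : Module.Dual ℝ V) : ℝ := g (sharp g hg α) (sharp g hg β)

/-- The scalar product of two endomorphisms: `Tr (f ∘ h*)`. -/
def innerEndo (g : LinearMap.BilinForm ℝ V) (hg : g.Nondegenerate)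
    (f h : V →ₗ[ℝ] V) : ℝ := trace ℝ V (f ∘ₗ adjE g hg h)

/-- The scalar product of two 2-forms: `(1/2) Tr (A ∘ B*)`. -/
def inner2 (g : LinearMap.BilinForm ℝ V) (hg : g.Nondegenerate)
    (α β : LinearMap.BilinForm ℝ V) : ℝ :=
  (2:ℝ)⁻¹ * trace ℝ V (endoOf g hg α ∘ₗ adjE g hg (endoOf g hg β))

/-- The 2-form `d(v♭) : (x, y) ↦ - g(v, [x,y])`. -/
def dflat (g : LinearMap.BilinForm ℝ V) (br : V →ₗ[ℝ] V →ₗ[ℝ] V)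
    (v : V) : LinearMap.BilinForm ℝ V :=
  - ((LinearMap.llcomp ℝ V V ℝ (g v)) ∘ₗ br)

/-- The Ricci tensor of a metric Lie algebra:
`2 ric(v,w) = -Tr ad((v⌟dw♭ + w⌟dv♭)♯) + g(dv♭,dw♭) - g(ad v, ad w) - Tr(ad v ∘ ad w)`. -/
def ricci (br : V →ₗ[ℝ] V →ₗ[ℝ] V) (g : LinearMap.BilinForm ℝ V)
    (hg : g.Nondegenerate) (v w : V) : ℝ :=
  (- trace ℝ V (br (sharp g hg (dflat g br w v + dflat g br v w)))
    + inner2 g hg (dflat g br v) (dflat g br w)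
    - innerEndo g hg (br v) (br w)
    - trace ℝ V (br v ∘ₗ br w)) / 2

/-- A Sasaki structure `(φ, ξ, η, g)` on a Lie algebra with bracket `br`. -/
def IsSasaki (br : V →ₗ[ℝ] V →ₗ[ℝ] V) (g : LinearMap.BilinForm ℝ V)
    (φ : V →ₗ[ℝ] V) (ξ : V) (η : Module.Dual ℝ V) : Prop :=
  η ξ = 1 ∧ (∀ x, η (φ x) = 0) ∧ (∀ x, φ (φ x) = - x + η x • ξ) ∧
    g ξ ξ = 1 ∧ (∀ x, η x = g ξ x) ∧
    (∀ x y, g (φ x) (φ y) = g x y - η x * η y) ∧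
    (∀ x y, φ (φ (br x y)) + br (φ x) (φ y) - φ (br (φ x) y)
        - φ (br x (φ y)) - η (br x y) • ξ = 0) ∧
    (∀ x y, - η (br x y) = 2 * g x (φ y))

/-- A pseudo-Kähler structure `(g, J, ω)`, where `ω (x, y) = g (x, J y)`. -/
def IsPseudoKahler (br : V →ₗ[ℝ] V →ₗ[ℝ] V) (g : LinearMap.BilinForm ℝ V)
    (J : V →ₗ[ℝ] V) : Prop :=
  (∀ x, J (J x) = - x) ∧ (∀ x y, g (J x) (J y) = g x y) ∧
    (∀ x y, br (J x) (J y) - J (br (J x) y) - J (br x (J y)) - br x y = 0) ∧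
    (∀ x y z, g (br x y) (J z) + g (br y z) (J x) + g (br z x) (J y) = 0)

/-! ### Auxiliary lemmas -/

section AuxHelpers

variable (g : LinearMap.BilinForm ℝ V) (hg : g.Nondegenerate)

lemma sharp_spec (α : Module.Dual ℝ V) (y : V) : g (sharp g hg α) y = α y :=
  LinearMap.BilinForm.apply_toDual_symm_apply α y

lemma eq_of_gapp (hg : g.Nondegenerate) {a b : V} (h : ∀ y, g a y = g b y) :
    a = b := by
  have h0 : ∀ y, g (a - b) y = 0 := by
    intro y
    simp [map_sub, LinearMap.sub_apply, h y]
  exact sub_eq_zero.mp (hg.1 _ h0)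

lemma sharp_unique (α : Module.Dual ℝ V) (u : V) (h : ∀ y, g u y = α y) :
    sharp g hg α = u :=
  eq_of_gapp g hg fun y => by rw [sharp_spec, h]

lemma adjE_spec (f : V →ₗ[ℝ] V) (y z : V) :
    g (adjE g hg f y) z = g (f z) y := by
  simp [adjE, LinearMap.comp_apply, sharp_spec, LinearMap.flip_apply,
    LinearMap.llcomp_apply]

lemma adjE_apply_eq (f : V →ₗ[ℝ] V) (y u : V)
    (h : ∀ z, g u z = g (f z) y) : adjE g hg f y = u :=
  eq_of_gapp g hg fun z => by rw [adjE_spec, ← h]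

lemma adjE_zero : adjE g hg (0 : V →ₗ[ℝ] V) = 0 := by
  ext y
  exact adjE_apply_eq g hg 0 y 0 (by simp)

lemma adjE_smul (c : ℝ) (f : V →ₗ[ℝ] V) :
    adjE g hg (c • f) = c • adjE g hg f := by
  ext y
  refine adjE_apply_eq g hg _ y _ fun z => ?_
  simp [LinearMap.smul_apply, map_smul, adjE_spec g hg f y z, smul_eq_mul]

lemma endoOf_smul (c : ℝ) (β : LinearMap.BilinForm ℝ V) :
    endoOf g hg (c • β) = c • endoOf g hg β := by
  ext x
  simp [endoOf, LinearMap.smul_apply, map_smul]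

lemma inner2_smul_left (c : ℝ) (α β : LinearMap.BilinForm ℝ V) :
    inner2 g hg (c • α) β = c * inner2 g hg α β := by
  simp only [inner2, endoOf_smul, LinearMap.smul_comp, map_smul, smul_eq_mul]
  ring

lemma inner2_smul_right (c : ℝ) (α β : LinearMap.BilinForm ℝ V) :
    inner2 g hg α (c • β) = c * inner2 g hg α β := by
  simp only [inner2, endoOf_smul, adjE_smul, LinearMap.comp_smul, map_smul,
    smul_eq_mul]
  ring

lemma trace_ad_zero (br : V →ₗ[ℝ] V →ₗ[ℝ] V) (hnil : IsNilpotentBracket br)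
    (u : V) : trace ℝ V (br u) = 0 := by
  obtain ⟨n, hn⟩ := hnil
  have key : ∀ (m : ℕ) (x : V),
      (List.replicate m u).foldr (fun v y => br v y) x = ((br u) ^ m) x := by
    intro m
    induction m with
    | zero => intro x; simp
    | succ m ih =>
        intro x
        simp [List.replicate_succ, ih, pow_succ', Module.End.mul_apply]
  have hpow : (br u) ^ n = 0 := by
    ext x
    have := hn (List.replicate n u) (by simp) x
    rw [key n x] at this
    simpa using this
  exact isNilpotent_iff_eq_zero.mp
    (LinearMap.isNilpotent_trace_of_isNilpotent ⟨n, hpow⟩)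

lemma trace_prod_block {K : Type} [AddCommGroup K] [Module ℝ K]
    [FiniteDimensional ℝ K] (T : (V × K) →ₗ[ℝ] (V × K)) :
    trace ℝ (V × K) T =
      trace ℝ V (fst ℝ V K ∘ₗ T ∘ₗ inl ℝ V K) +
        trace ℝ K (snd ℝ V K ∘ₗ T ∘ₗ inr ℝ V K) := by
  have hT : T = inl ℝ V K ∘ₗ (fst ℝ V K ∘ₗ T) + inr ℝ V K ∘ₗ (snd ℝ V K ∘ₗ T) := by
    ext x <;> simp
  nth_rewrite 1 [hT]
  rw [map_add, trace_comp_comm' (fst ℝ V K ∘ₗ T) (inl ℝ V K),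
    trace_comp_comm' (snd ℝ V K ∘ₗ T) (inr ℝ V K), comp_assoc, comp_assoc]

lemma trace_pi {k : ℕ} (M : (Fin k → ℝ) →ₗ[ℝ] (Fin k → ℝ)) :
    trace ℝ (Fin k → ℝ) M = ∑ s, M (Pi.single s 1) s := by
  rw [trace_eq_matrix_trace ℝ (Pi.basisFun ℝ (Fin k)) M, Matrix.trace]
  refine Finset.sum_congr rfl fun s _ => ?_
  simp [Matrix.diag, LinearMap.toMatrix_apply]

end AuxHelpers

/-- The 2-form on `V` associated to an element of the central extension. -/
def tauExt {V : Type} [AddCommGroup V] [Module ℝ V]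
    (g : LinearMap.BilinForm ℝ V) (br : V →ₗ[ℝ] V →ₗ[ℝ] V) {k : ℕ}
    (σ : Fin k → LinearMap.BilinForm ℝ V) (ε : Fin k → ℝ)
    (p : V × (Fin k → ℝ)) : LinearMap.BilinForm ℝ V :=
  dflat g br p.1 + ∑ s, (ε s * p.2 s) • σ s

/-- the Ricci tensor of a central extension of a nilpotent metric Lie
algebra by closed 2-forms `σ₁, …, σ_k`. -/
theorem ricci_of_central_extension
    {V : Type} [AddCommGroup V] [Module ℝ V] [FiniteDimensional ℝ V]
    (br : V →ₗ[ℝ] V →ₗ[ℝ] V) (hbr : IsLieBracket br)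
    (hnil : IsNilpotentBracket br)
    (g : LinearMap.BilinForm ℝ V) (hsym : ∀ x y, g x y = g y x)
    (hg : g.Nondegenerate)
    (k : ℕ) (σ : Fin k → LinearMap.BilinForm ℝ V)
    (hσalt : ∀ s (x y : V), σ s x y = - σ s y x)
    (hσcocycle : ∀ s (x y z : V),
      σ s (br x y) z + σ s (br y z) x + σ s (br z x) y = 0)
    (ε : Fin k → ℝ) (hε : ∀ s, ε s = 1 ∨ ε s = -1)
    -- the central extension 𝔤 = ǧ ⊕ ℝᵏ
    (brW : (V × (Fin k → ℝ)) →ₗ[ℝ] (V × (Fin k → ℝ)) →ₗ[ℝ] (V × (Fin k → ℝ)))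
    (hbrW : ∀ p q : V × (Fin k → ℝ),
      brW p q = (br p.1 q.1, fun s => - σ s p.1 q.1))
    -- the metric g = ǧg + Σ_s ε_s e^s ⊗ e^s
    (gW : LinearMap.BilinForm ℝ (V × (Fin k → ℝ)))
    (hgW : ∀ p q : V × (Fin k → ℝ),
      gW p q = g p.1 q.1 + ∑ s, ε s * p.2 s * q.2 s)
    (hgWnd : gW.Nondegenerate) :
    (∀ v w : V,
      ricci brW gW hgWnd (v, 0) (w, 0) =
        ricci br g hg v w - (2:ℝ)⁻¹ * ∑ s, ε s * inner1 g hg (σ s v) (σ s w)) ∧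
    (∀ (v : V) (s : Fin k),
      ricci brW gW hgWnd (v, 0) (0, Pi.single s 1) =
        (2:ℝ)⁻¹ * ε s * inner2 g hg (dflat g br v) (σ s)) ∧
    (∀ s t : Fin k,
      ricci brW gW hgWnd (0, Pi.single s 1) (0, Pi.single t 1) =
        (2:ℝ)⁻¹ * ε s * ε t * inner2 g hg (σ s) (σ t)) := by
  -- notation
  -- the bracket with a central element vanishes
  have hbr0 : ∀ c : (Fin k → ℝ), brW (0, c) = 0 := by
    intro c
    refine LinearMap.ext fun x => ?_
    rw [hbrW]
    simp [Prod.ext_iff]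
    rfl
  -- values of τ
  have hτv : ∀ v : V, tauExt g br σ ε (v, (0 : (Fin k → ℝ))) = dflat g br v := by
    intro v
    simp [tauExt]
  have hdflat0 : dflat g br (0 : V) = 0 := by
    ext x y
    simp [dflat]
  have hτe : ∀ s : Fin k, tauExt g br σ ε ((0 : V), Pi.single s 1) = ε s • σ s := by
    intro s
    simp only [tauExt, hdflat0, zero_add]
    rw [Finset.sum_eq_single s]
    · simp
    · intro t _ hts
      simp [Pi.single_apply, hts]
    · simp
  -- dflat on the extension
  have hdW : ∀ (p x y : V × (Fin k → ℝ)), dflat gW brW p x y = tauExt g br σ ε p x.1 y.1 := by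
    intro p x y
    simp only [dflat, tauExt, LinearMap.neg_apply, LinearMap.comp_apply,
      LinearMap.llcomp_apply, hbrW, hgW, LinearMap.add_apply, LinearMap.sum_apply,
      LinearMap.smul_apply, smul_eq_mul]
    rw [neg_add]
    congr 1
    rw [← Finset.sum_neg_distrib]
    exact Finset.sum_congr rfl fun s _ => by ring
  -- sharp on the extension for pulled-back forms
  have hsharpW : ∀ (α : Module.Dual ℝ V) (β : Module.Dual ℝ (V × (Fin k → ℝ))),
      (∀ q : V × (Fin k → ℝ), β q = α q.1) → sharp gW hgWnd β = (sharp g hg α, 0) := by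
    intro α β hβ
    refine sharp_unique gW hgWnd β _ fun q => ?_
    rw [hgW, hβ]
    simp [sharp_spec]
  -- traces of adjoint maps vanish (nilpotency)
  have htr0 : ∀ u : V, trace ℝ V (br u) = 0 := trace_ad_zero br hnil
  have htrW0 : ∀ p : V × (Fin k → ℝ), trace ℝ (V × (Fin k → ℝ)) (brW p) = 0 := by
    intro p
    rw [trace_prod_block]
    have h1 : fst ℝ V (Fin k → ℝ) ∘ₗ brW p ∘ₗ inl ℝ V (Fin k → ℝ) = br p.1 := by
      ext x
      simp [hbrW]
    have h2 : snd ℝ V (Fin k → ℝ) ∘ₗ brW p ∘ₗ inr ℝ V (Fin k → ℝ) = 0 := by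
      refine LinearMap.ext fun c => funext fun s => ?_
      simp [hbrW]
    rw [h1, h2, htr0, map_zero, add_zero]
  -- the endomorphism associated to dflat on the extension
  have hendoW : ∀ (p x : V × (Fin k → ℝ)),
      endoOf gW hgWnd (dflat gW brW p) x =
        (endoOf g hg (tauExt g br σ ε p) x.1, 0) := by
    intro p x
    show sharp gW hgWnd (dflat gW brW p x) = _
    rw [hsharpW (tauExt g br σ ε p x.1) _ (fun q => hdW p x q)]
    rfl
  -- adjoint of the associated endomorphism
  have hadjW : ∀ (p y : V × (Fin k → ℝ)),
      adjE gW hgWnd (endoOf gW hgWnd (dflat gW brW p)) y =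
        (adjE g hg (endoOf g hg (tauExt g br σ ε p)) y.1, 0) := by
    intro p y
    refine adjE_apply_eq gW hgWnd _ y _ fun z => ?_
    rw [hendoW p z, hgW, hgW]
    simp [adjE_spec]
  -- inner2 reduction
  have hI2 : ∀ p q : V × (Fin k → ℝ),
      inner2 gW hgWnd (dflat gW brW p) (dflat gW brW q) =
        inner2 g hg (tauExt g br σ ε p) (tauExt g br σ ε q) := by
    intro p q
    unfold inner2
    congr 1
    rw [trace_prod_block]
    have h1 : fst ℝ V (Fin k → ℝ) ∘ₗ (endoOf gW hgWnd (dflat gW brW p) ∘ₗ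
        adjE gW hgWnd (endoOf gW hgWnd (dflat gW brW q))) ∘ₗ inl ℝ V (Fin k → ℝ) =
        endoOf g hg (tauExt g br σ ε p) ∘ₗ
          adjE g hg (endoOf g hg (tauExt g br σ ε q)) := by
      ext x
      simp [hadjW, hendoW]
    have h2 : snd ℝ V (Fin k → ℝ) ∘ₗ (endoOf gW hgWnd (dflat gW brW p) ∘ₗ
        adjE gW hgWnd (endoOf gW hgWnd (dflat gW brW q))) ∘ₗ inr ℝ V (Fin k → ℝ) = 0 := by
      refine LinearMap.ext fun c => funext fun s => ?_
      simp [hadjW, hendoW]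
    rw [h1, h2, map_zero, add_zero]
  -- adjoint of ad (w,0) on the extension
  have hadjBr : ∀ (w : V) (y : V × (Fin k → ℝ)),
      adjE gW hgWnd (brW (w, 0)) y =
        (adjE g hg (br w) y.1 - ∑ s, (ε s * y.2 s) • sharp g hg (σ s w), 0) := by
    intro w y
    refine adjE_apply_eq gW hgWnd _ y _ fun z => ?_
    rw [hgW, hbrW, hgW]
    simp only [map_sub, LinearMap.sub_apply, map_sum, LinearMap.sum_apply,
      map_smul, LinearMap.smul_apply, smul_eq_mul, adjE_spec, sharp_spec,
      Pi.zero_apply, mul_zero, zero_mul, Finset.sum_const_zero, add_zero]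
    rw [sub_eq_add_neg, ← Finset.sum_neg_distrib]
    congr 1
    exact Finset.sum_congr rfl fun s _ => by ring
  -- innerEndo reduction for two noncentral elements
  have hIEvw : ∀ v w : V,
      innerEndo gW hgWnd (brW (v, 0)) (brW (w, 0)) =
        innerEndo g hg (br v) (br w) + ∑ s, ε s * inner1 g hg (σ s v) (σ s w) := by
    intro v w
    unfold innerEndo
    rw [trace_prod_block]
    have h1 : fst ℝ V (Fin k → ℝ) ∘ₗ (brW (v, 0) ∘ₗ adjE gW hgWnd (brW (w, 0))) ∘ₗ inl ℝ V (Fin k → ℝ) =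
        br v ∘ₗ adjE g hg (br w) := by
      ext x
      simp [hadjBr, hbrW]
    have h2 : trace ℝ (Fin k → ℝ) (snd ℝ V (Fin k → ℝ) ∘ₗ (brW (v, 0) ∘ₗ adjE gW hgWnd (brW (w, 0)))
        ∘ₗ inr ℝ V (Fin k → ℝ)) = ∑ s, ε s * inner1 g hg (σ s v) (σ s w) := by
      rw [trace_pi]
      refine Finset.sum_congr rfl fun s _ => ?_
      simp only [LinearMap.comp_apply, inr_apply, snd_apply, hadjBr, hbrW]
      rw [Finset.sum_eq_single s]
      · simp only [Prod.fst_zero, map_zero, zero_sub, Pi.single_eq_same, mul_one,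
          map_neg, map_smul, smul_eq_mul, neg_neg, inner1, sharp_spec]
      · intro t _ hts
        simp [Pi.single_apply, hts]
      · simp
    rw [h1, h2]
  -- trace of composition of two noncentral adjoints
  have hT4 : ∀ v w : V,
      trace ℝ (V × (Fin k → ℝ)) (brW (v, 0) ∘ₗ brW (w, 0)) = trace ℝ V (br v ∘ₗ br w) := by
    intro v w
    rw [trace_prod_block]
    have h1 : fst ℝ V (Fin k → ℝ) ∘ₗ (brW (v, 0) ∘ₗ brW (w, 0)) ∘ₗ inl ℝ V (Fin k → ℝ) =
        br v ∘ₗ br w := by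
      ext x
      simp [hbrW]
    have h2 : snd ℝ V (Fin k → ℝ) ∘ₗ (brW (v, 0) ∘ₗ brW (w, 0)) ∘ₗ inr ℝ V (Fin k → ℝ) = 0 := by
      refine LinearMap.ext fun c => funext fun s => ?_
      simp [hbrW]
    rw [h1, h2, map_zero, add_zero]
  refine ⟨fun v w => ?_, fun v s => ?_, fun s t => ?_⟩
  · -- case (v, 0), (w, 0)
    simp only [ricci]
    rw [htrW0, htr0, hI2, hIEvw, hT4, hτv, hτv]
    ring
  · -- case (v, 0), (0, e_s)
    simp only [ricci]
    rw [htrW0, hI2, hτv, hτe, inner2_smul_right]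
    have hz : brW ((0 : V), Pi.single s 1) = 0 := hbr0 _
    rw [hz]
    unfold innerEndo
    rw [adjE_zero]
    simp only [LinearMap.comp_zero, LinearMap.zero_comp, map_zero]
    ring
  · -- case (0, e_s), (0, e_t)
    simp only [ricci]
    rw [htrW0, hI2, hτe, hτe, inner2_smul_right, inner2_smul_left]
    rw [hbr0, hbr0]
    unfold innerEndo
    rw [adjE_zero]
    simp only [LinearMap.comp_zero, LinearMap.zero_comp, map_zero]
    ring
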